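/- Let n be an integer with 3 ≤ n ≤ 8. In Z^{10-n} with generators H, E_1, ..., E_{9-n} and intersection form H² = 1, H·E_i = 0, E_i·E_j = -δ_{ij}, a class C = aH - Σ_{i=1}^{9-n} b_i E_i with a ≥ 0 and b_i ≥ 0 satisfies 3a - Σ b_i = 2 and a² - Σ b_i² = 0 if and only if C is one of: (i) H - E_i for some i; (ii) 2H - E_a - E_b - E_c - E_d for four distinct indices; or (iii) 3H - 2E_a - E_b - E_c - E_d - E_e - E_f for six distinct indices (whenever such indices exist among 1, ..., 9-n). -/
import Mathlib


/-- Lemma 2.2 (conics on Del Pezzo surfaces), as a Diophantine classification.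
A class `C = a·H - ∑ bᵢ·Eᵢ` with `a ≥ 0`, `bᵢ ≥ 0` satisfies
`3a - ∑ bᵢ = 2` and `a² - ∑ bᵢ² = 0` iff it is one of `H - E_i`,
`2H - E_a - E_b - E_c - E_d`, or `3H - 2E_a - E_b - E_c - E_d - E_e - E_f`. -/
theorem conic_classes_on_del_pezzo (n : ℕ) (hn1 : 3 ≤ n) (hn2 : n ≤ 8)
    (a : ℤ) (b : Fin (9 - n) → ℤ) (ha : 0 ≤ a) (hb : ∀ i, 0 ≤ b i) :
    (3 * a - ∑ i, b i = 2 ∧ a ^ 2 - ∑ i, (b i) ^ 2 = 0) ↔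
    ((∃ i, a = 1 ∧ ∀ l, b l = if l = i then 1 else 0) ∨
     (∃ s : Finset (Fin (9 - n)), s.card = 4 ∧ a = 2 ∧
        ∀ l, b l = if l ∈ s then 1 else 0) ∨
     (∃ k, ∃ s : Finset (Fin (9 - n)), s.card = 5 ∧ k ∉ s ∧ a = 3 ∧
        ∀ l, b l = if l = k then 2 else if l ∈ s then 1 else 0)) := by
  constructor
  · rintro ⟨h1, h2⟩
    have hS : ∑ i, b i = 3 * a - 2 := by linarith
    have hQ : ∑ i, (b i) ^ 2 = a ^ 2 := by linarith
    have hSnn : 0 ≤ ∑ i, b i := Finset.sum_nonneg fun i _ => hb i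
    have ha1 : 1 ≤ a := by omega
    -- Cauchy–Schwarz gives a ≤ 3
    have hcs := sq_sum_le_card_mul_sum_sq (s := (Finset.univ : Finset (Fin (9 - n)))) (f := b)
    have hcard : ((Finset.univ : Finset (Fin (9 - n))).card : ℤ) ≤ 6 := by
      simp only [Finset.card_univ, Fintype.card_fin]
      omega
    have ha3 : a ≤ 3 := by
      rw [hS, hQ] at hcs
      nlinarith [sq_nonneg a]
    -- each bᵢ(bᵢ-1) ≥ 0, and their sum is (a-1)(a-2) ≤ 2
    have ht0 : ∀ i, 0 ≤ b i ^ 2 - b i := by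
      intro i
      have h := hb i
      have : b i = 0 ∨ 1 ≤ b i := by omega
      rcases this with h0 | h0 <;> nlinarith
    have htsum : ∑ i, (b i ^ 2 - b i) = a ^ 2 - 3 * a + 2 := by
      rw [Finset.sum_sub_distrib, hS, hQ]; ring
    have hb2 : ∀ i, b i ≤ 2 := by
      intro i
      have hle : b i ^ 2 - b i ≤ a ^ 2 - 3 * a + 2 := by
        rw [← htsum]
        exact Finset.single_le_sum (f := fun i => b i ^ 2 - b i) (fun j _ => ht0 j)
          (Finset.mem_univ i)
      have h2 : a ^ 2 - 3 * a + 2 ≤ 2 := by nlinarith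
      by_contra hc
      push_neg at hc
      nlinarith
    classical
    set s1 := Finset.univ.filter (fun i => b i = 1) with hs1
    set s2 := Finset.univ.filter (fun i => b i = 2) with hs2
    have hms1 : ∀ l, l ∈ s1 ↔ b l = 1 := by intro l; simp [hs1]
    have hms2 : ∀ l, l ∈ s2 ↔ b l = 2 := by intro l; simp [hs2]
    have hsum1 : ∑ i, b i = (s1.card : ℤ) + 2 * (s2.card : ℤ) := by
      have : ∀ i ∈ Finset.univ,
          b i = (if b i = 1 then (1 : ℤ) else 0) + 2 * (if b i = 2 then (1 : ℤ) else 0) := by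
        intro i _
        have h1 := hb i; have h2 := hb2 i
        have : b i = 0 ∨ b i = 1 ∨ b i = 2 := by omega
        rcases this with h | h | h <;> simp [h]
      rw [Finset.sum_congr rfl this, Finset.sum_add_distrib, ← Finset.mul_sum]
      simp [hs1, hs2, Finset.sum_boole]
    have hsum2 : ∑ i, (b i) ^ 2 = (s1.card : ℤ) + 4 * (s2.card : ℤ) := by
      have : ∀ i ∈ Finset.univ,
          (b i) ^ 2 = (if b i = 1 then (1 : ℤ) else 0) + 4 * (if b i = 2 then (1 : ℤ) else 0) := by
        intro i _
        have h1 := hb i; have h2 := hb2 i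
        have : b i = 0 ∨ b i = 1 ∨ b i = 2 := by omega
        rcases this with h | h | h <;> simp [h]
      rw [Finset.sum_congr rfl this, Finset.sum_add_distrib, ← Finset.mul_sum]
      simp [hs1, hs2, Finset.sum_boole]
    rw [hS] at hsum1
    rw [hQ] at hsum2
    interval_cases a
    · -- a = 1 : c1 = 1, c2 = 0
      have hc1 : s1.card = 1 := by omega
      have hc2 : s2.card = 0 := by omega
      obtain ⟨k, hk⟩ := Finset.card_eq_one.mp hc1
      left
      refine ⟨k, rfl, fun l => ?_⟩
      have hs2e : s2 = ∅ := Finset.card_eq_zero.mp hc2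
      by_cases hlk : l = k
      · subst hlk
        have : l ∈ s1 := hk ▸ Finset.mem_singleton_self l
        simp [(hms1 l).mp this]
      · have hne1 : b l ≠ 1 := by
          intro h
          exact hlk (Finset.mem_singleton.mp (hk ▸ (hms1 l).mpr h))
        have hne2 : b l ≠ 2 := by
          intro h
          simpa [hs2e] using (hms2 l).mpr h
        have h1 := hb l; have h2 := hb2 l
        have : b l = 0 := by omega
        simp [this, hlk]
    · -- a = 2 : c1 = 4, c2 = 0
      have hc1 : s1.card = 4 := by omega
      have hc2 : s2.card = 0 := by omega
      have hs2e : s2 = ∅ := Finset.card_eq_zero.mp hc2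
      right; left
      refine ⟨s1, hc1, rfl, fun l => ?_⟩
      by_cases hl : l ∈ s1
      · simp [hl, (hms1 l).mp hl]
      · have hne1 : b l ≠ 1 := fun h => hl ((hms1 l).mpr h)
        have hne2 : b l ≠ 2 := by
          intro h
          simpa [hs2e] using (hms2 l).mpr h
        have h1 := hb l; have h2 := hb2 l
        have : b l = 0 := by omega
        simp [this, hl]
    · -- a = 3 : c1 = 5, c2 = 1
      have hc1 : s1.card = 5 := by omega
      have hc2 : s2.card = 1 := by omega
      obtain ⟨k, hk⟩ := Finset.card_eq_one.mp hc2
      right; right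
      have hbk : b k = 2 := (hms2 k).mp (hk ▸ Finset.mem_singleton_self k)
      refine ⟨k, s1, hc1, ?_, rfl, fun l => ?_⟩
      · intro h
        have := (hms1 k).mp h
        omega
      · by_cases hlk : l = k
        · subst hlk; simp [hbk]
        · have hne2 : b l ≠ 2 := by
            intro h
            exact hlk (Finset.mem_singleton.mp (hk ▸ (hms2 l).mpr h))
          by_cases hl : l ∈ s1
          · simp [hl, hlk, (hms1 l).mp hl]
          · have hne1 : b l ≠ 1 := fun h => hl ((hms1 l).mpr h)
            have h1 := hb l; have h2 := hb2 l
            have : b l = 0 := by omega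
            simp [this, hl, hlk]
  · rintro (⟨i, rfl, hbl⟩ | ⟨s, hcard, rfl, hbl⟩ | ⟨k, s, hcard, hks, rfl, hbl⟩)
    · have h1 : ∑ l, b l = 1 := by
        rw [Finset.sum_congr rfl (fun l _ => hbl l)]
        simp
      have h2 : ∑ l, (b l) ^ 2 = 1 := by
        have : ∀ l ∈ Finset.univ, (b l) ^ 2 = b l := by
          intro l _
          rw [hbl l]
          split_ifs <;> ring
        rw [Finset.sum_congr rfl this, h1]
      constructor <;> omega
    · have h1 : ∑ l, b l = 4 := by
        rw [Finset.sum_congr rfl (fun l _ => hbl l)]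
        rw [Finset.sum_ite_mem]
        simp [hcard]
      have h2 : ∑ l, (b l) ^ 2 = 4 := by
        have : ∀ l ∈ Finset.univ, (b l) ^ 2 = b l := by
          intro l _
          rw [hbl l]
          split_ifs <;> ring
        rw [Finset.sum_congr rfl this, h1]
      constructor <;> omega
    · have key : ∀ l, b l = 2 * (if l = k then (1 : ℤ) else 0) + (if l ∈ s then 1 else 0) := by
        intro l
        rw [hbl l]
        by_cases hlk : l = k
        · subst hlk; simp [hks]
        · simp [hlk]
      have key2 : ∀ l, (b l) ^ 2 = 4 * (if l = k then (1 : ℤ) else 0) + (if l ∈ s then 1 else 0) := by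
        intro l
        rw [hbl l]
        by_cases hlk : l = k
        · subst hlk; simp [hks]
        · by_cases hl : l ∈ s <;> simp [hlk, hl]
      have h1 : ∑ l, b l = 7 := by
        rw [Finset.sum_congr rfl (fun l _ => key l), Finset.sum_add_distrib, ← Finset.mul_sum]
        rw [Finset.sum_ite_eq' Finset.univ k (fun _ => (1 : ℤ)), Finset.sum_ite_mem]
        simp [hcard]
      have h2 : ∑ l, (b l) ^ 2 = 9 := by
        rw [Finset.sum_congr rfl (fun l _ => key2 l), Finset.sum_add_distrib, ← Finset.mul_sum]
        rw [Finset.sum_ite_eq' Finset.univ k (fun _ => (1 : ℤ)), Finset.sum_ite_mem]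
        simp [hcard]
      constructor <;> omega
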